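/- If the 8 vertices of a cube in ℝ³ are orthogonally projected to z₁, ..., z₈ ∈ ℂ, then (z₁ + ⋯ + z₈)² = 8(z₁² + ⋯ + z₈²). -/
import Mathlib


open Matrix Complex

/-- if the 8 vertices of a cube in `ℝ³` (the image of the standard unit cube
`{0,1}³` under a similarity) are orthogonally projected to complex numbers `z_ε`, then
`(∑ z_ε)² = 8 ∑ z_ε²`. -/
theorem cube_vertices_projection (s : ℝ) (hs : 0 < s)
    (U : Matrix (Fin 3) (Fin 3) ℝ) (hU : Uᵀ * U = 1) (a : Fin 3 → ℝ)
    (z : Fin 2 × Fin 2 × Fin 2 → ℂ)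
    (hz : ∀ ε : Fin 2 × Fin 2 × Fin 2,
      z ε = ((s • (U *ᵥ ![(ε.1 : ℝ), (ε.2.1 : ℝ), (ε.2.2 : ℝ)]) + a) 0 : ℂ) +
            ((s • (U *ᵥ ![(ε.1 : ℝ), (ε.2.1 : ℝ), (ε.2.2 : ℝ)]) + a) 1 : ℂ) * Complex.I) :
    (∑ ε : Fin 2 × Fin 2 × Fin 2, z ε) ^ 2 =
      8 * ∑ ε : Fin 2 × Fin 2 × Fin 2, (z ε) ^ 2 := by
  have hUUT : U * Uᵀ = 1 := mul_eq_one_comm.mp hU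
  have h00 : U 0 0 * U 0 0 + U 0 1 * U 0 1 + U 0 2 * U 0 2 = 1 := by
    have := congrFun (congrFun hUUT 0) 0
    simpa [Matrix.mul_apply, Fin.sum_univ_three, Matrix.transpose_apply] using this
  have h11 : U 1 0 * U 1 0 + U 1 1 * U 1 1 + U 1 2 * U 1 2 = 1 := by
    have := congrFun (congrFun hUUT 1) 1
    simpa [Matrix.mul_apply, Fin.sum_univ_three, Matrix.transpose_apply] using this
  have h01 : U 0 0 * U 1 0 + U 0 1 * U 1 1 + U 0 2 * U 1 2 = 0 := by
    have := congrFun (congrFun hUUT 0) 1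
    simpa [Matrix.mul_apply, Fin.sum_univ_three, Matrix.transpose_apply] using this
  have key1 : ((U 0 0 : ℂ))^2 + (U 0 1 : ℂ)^2 + (U 0 2 : ℂ)^2 =
      ((U 1 0 : ℂ))^2 + (U 1 1 : ℂ)^2 + (U 1 2 : ℂ)^2 := by
    have h00' : ((U 0 0 : ℂ))^2 + (U 0 1 : ℂ)^2 + (U 0 2 : ℂ)^2 = 1 := by
      exact_mod_cast congrArg (Complex.ofReal) (by nlinarith [h00] : U 0 0 ^2 + U 0 1 ^2 + U 0 2 ^2 = 1)
    have h11' : ((U 1 0 : ℂ))^2 + (U 1 1 : ℂ)^2 + (U 1 2 : ℂ)^2 = 1 := by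
      exact_mod_cast congrArg (Complex.ofReal) (by nlinarith [h11] : U 1 0 ^2 + U 1 1 ^2 + U 1 2 ^2 = 1)
    rw [h00', h11']
  have key2 : (U 0 0 : ℂ) * (U 1 0 : ℂ) + (U 0 1 : ℂ) * (U 1 1 : ℂ)
      + (U 0 2 : ℂ) * (U 1 2 : ℂ) = 0 := by
    exact_mod_cast congrArg (Complex.ofReal) h01
  have hw : ((U 0 0 : ℂ) + (U 1 0 : ℂ) * Complex.I)^2
      + ((U 0 1 : ℂ) + (U 1 1 : ℂ) * Complex.I)^2
      + ((U 0 2 : ℂ) + (U 1 2 : ℂ) * Complex.I)^2 = 0 := by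
    linear_combination key1 + (2*Complex.I) * key2 +
      ((U 1 0 : ℂ)^2 + (U 1 1 : ℂ)^2 + (U 1 2 : ℂ)^2) * Complex.I_sq
  simp only [hz, Fintype.sum_prod_type, Fin.sum_univ_two, Matrix.mulVec, dotProduct,
    Fin.sum_univ_three, Matrix.cons_val_zero, Matrix.cons_val_one, Matrix.head_cons,
    Matrix.cons_val_two, Matrix.tail_cons, Pi.add_apply, Pi.smul_apply, smul_eq_mul,
    Fin.val_zero, Fin.val_one, Nat.cast_zero, Nat.cast_one]
  push_cast
  linear_combination (-16 * (s:ℂ)^2) * hw
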